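/- arXiv:2412.08417 — 7 statements merged into one kernel-verified Lean document; each statement's English description precedes it below -/
import Mathlib

section
/- For n ≥ 6, the signless Laplacian spectral radius q(S_{n,1}⁺) is the largest real root of the polynomial x³ − (n+3)x² + 3nx − 4, and it satisfies n < q(S_{n,1}⁺) < n + 1. -/
open SimpleGraph Finset

/-- The signless Laplacian spectral radius of a graph: the largest real eigenvalue
(root of the characteristic polynomial) of `Q(G) = D(G) + A(G)`. -/
noncomputable def qrad {n : ℕ} (G : SimpleGraph (Fin n)) : ℝ :=
  letI := Classical.decRel G.Adj
  sSup {x : ℝ | (Matrix.charpoly (G.degMatrix ℝ + G.adjMatrix ℝ)).IsRoot x}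

/-- `contains H G` : `G` contains a subgraph isomorphic to `H`. -/
def contains {α β : Type*} (H : SimpleGraph α) (G : SimpleGraph β) : Prop :=
  ∃ f : α → β, Function.Injective f ∧ ∀ a b, H.Adj a b → G.Adj (f a) (f b)

/-- The theta graph θ(1,2,2) (= K₄ minus an edge). -/
def theta122 : SimpleGraph (Fin 4) :=
  SimpleGraph.fromEdgeSet {s(0,1), s(0,2), s(1,2), s(0,3), s(1,3)}

/-- The theta graph θ(1,2,3). -/
def theta123 : SimpleGraph (Fin 5) :=
  SimpleGraph.fromEdgeSet {s(0,1), s(0,2), s(2,1), s(0,3), s(3,4), s(4,1)}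

/-- The friendship graph `F n`: center `0`; the other vertices are paired up
`{1,2}, {3,4}, …` into triangles through the center, with a pendant vertex left
over when `n` is even. -/
def friendship (n : ℕ) : SimpleGraph (Fin n) :=
  SimpleGraph.fromRel (fun i j => i.val = 0 ∨ (i.val + 1) / 2 = (j.val + 1) / 2)

/-- `Sgraph n k` = `S_{n,k}`, the join of `K_k` with `n - k` isolated vertices. -/
def Sgraph (n k : ℕ) : SimpleGraph (Fin n) :=
  SimpleGraph.fromRel (fun i _ => i.val < k)

/-- `Splus n` = `S_{n,1}⁺`, the star `K_{1,n-1}` plus one edge between two leaves. -/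
def Splus (n : ℕ) : SimpleGraph (Fin n) :=
  SimpleGraph.fromRel (fun i j => i.val = 0 ∨ (i.val = 1 ∧ j.val = 2))

/-- `K₁ ∨ ((n-1)/3) K₃` : vertex `0` joined to `(n-1)/3` disjoint triangles. -/
def joinK3s (n : ℕ) : SimpleGraph (Fin n) :=
  SimpleGraph.fromRel (fun i j => i.val = 0 ∨ (i.val - 1) / 3 = (j.val - 1) / 3)

/-- The number of edges of `G` lying inside the vertex set `s` (the number of
edges of the induced subgraph `G[s]`). -/
noncomputable def edgesIn {V : Type*} (G : SimpleGraph V) (s : Set V) : ℕ :=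
  {e | e ∈ G.edgeSet ∧ ∀ v ∈ e, v ∈ s}.ncard


open Matrix

open Polynomial Matrix in
lemma my_charpoly_eval_eq {m : ℕ} (M : Matrix (Fin m) (Fin m) ℝ) (x : ℝ) :
    M.charpoly.eval x = (x • (1 : Matrix (Fin m) (Fin m) ℝ) - M).det := by
  rw [Matrix.charpoly, ← Polynomial.coe_evalRingHom, RingHom.map_det]
  congr 1
  ext i j
  by_cases h : i = j <;> simp [h, Matrix.charmatrix_apply, Matrix.one_apply]

open Polynomial Matrix in
lemma my_isRoot_iff {m : ℕ} (M : Matrix (Fin m) (Fin m) ℝ) (x : ℝ) :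
    M.charpoly.IsRoot x ↔ ∃ v ≠ 0, M *ᵥ v = x • v := by
  rw [Polynomial.IsRoot, my_charpoly_eval_eq, ← Matrix.exists_mulVec_eq_zero_iff]
  apply exists_congr; intro v
  apply and_congr_right; intro _
  rw [Matrix.sub_mulVec, Matrix.smul_mulVec, Matrix.one_mulVec, sub_eq_zero, eq_comm]

section
variable {n : ℕ} [DecidableRel (Splus n).Adj]

lemma splus_adj (i j : Fin n) : (Splus n).Adj i j ↔
    i ≠ j ∧ (i.val = 0 ∨ j.val = 0 ∨ (i.val = 1 ∧ j.val = 2) ∨ (j.val = 1 ∧ i.val = 2)) := by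
  simp only [Splus, fromRel_adj]
  tauto

lemma nb0 (hn : 6 ≤ n) : (Splus n).neighborFinset ⟨0, by omega⟩ = univ.erase ⟨0, by omega⟩ := by
  ext j
  rw [mem_neighborFinset, splus_adj]
  simp [Fin.ext_iff]
  omega

lemma nb1 (hn : 6 ≤ n) : (Splus n).neighborFinset ⟨1, by omega⟩ = {⟨0, by omega⟩, ⟨2, by omega⟩} := by
  ext j
  rw [mem_neighborFinset, splus_adj]
  simp [Fin.ext_iff]
  omega

lemma nb2 (hn : 6 ≤ n) : (Splus n).neighborFinset ⟨2, by omega⟩ = {⟨0, by omega⟩, ⟨1, by omega⟩} := by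
  ext j
  rw [mem_neighborFinset, splus_adj]
  simp [Fin.ext_iff]
  omega

lemma nbi (hn : 6 ≤ n) (i : Fin n) (hi : 3 ≤ i.val) :
    (Splus n).neighborFinset i = {⟨0, by omega⟩} := by
  ext j
  rw [mem_neighborFinset, splus_adj]
  simp [Fin.ext_iff]
  omega

lemma deg0 (hn : 6 ≤ n) : (Splus n).degree ⟨0, by omega⟩ = n - 1 := by
  rw [degree, nb0 hn, card_erase_of_mem (mem_univ _), card_univ, Fintype.card_fin]

lemma deg1 (hn : 6 ≤ n) : (Splus n).degree ⟨1, by omega⟩ = 2 := by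
  rw [degree, nb1 hn]
  rw [card_insert_of_notMem (by simp [Fin.ext_iff]), card_singleton]

lemma deg2 (hn : 6 ≤ n) : (Splus n).degree ⟨2, by omega⟩ = 2 := by
  rw [degree, nb2 hn]
  rw [card_insert_of_notMem (by simp [Fin.ext_iff]), card_singleton]

lemma degi (hn : 6 ≤ n) (i : Fin n) (hi : 3 ≤ i.val) : (Splus n).degree i = 1 := by
  rw [degree, nbi hn i hi, card_singleton]

/-- The signless Laplacian of `Splus n`. -/
noncomputable abbrev Qm (n : ℕ) [DecidableRel (Splus n).Adj] :
    Matrix (Fin n) (Fin n) ℝ := (Splus n).degMatrix ℝ + (Splus n).adjMatrix ℝ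

lemma mulVec0 (hn : 6 ≤ n) (v : Fin n → ℝ) :
    (Qm n *ᵥ v) ⟨0, by omega⟩ =
      ((n : ℝ) - 1) * v ⟨0, by omega⟩ + (∑ j, v j - v ⟨0, by omega⟩) := by
  rw [Matrix.add_mulVec, Pi.add_apply, degMatrix_mulVec_apply, adjMatrix_mulVec_apply,
    deg0 hn, nb0 hn, Finset.sum_erase_eq_sub (mem_univ _)]
  congr 2
  push_cast [Nat.cast_sub (by omega : 1 ≤ n)]
  ring

lemma mulVec1 (hn : 6 ≤ n) (v : Fin n → ℝ) :
    (Qm n *ᵥ v) ⟨1, by omega⟩ =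
      2 * v ⟨1, by omega⟩ + (v ⟨0, by omega⟩ + v ⟨2, by omega⟩) := by
  rw [Matrix.add_mulVec, Pi.add_apply, degMatrix_mulVec_apply, adjMatrix_mulVec_apply,
    deg1 hn, nb1 hn, Finset.sum_pair (by simp [Fin.ext_iff])]
  norm_num

lemma mulVec2 (hn : 6 ≤ n) (v : Fin n → ℝ) :
    (Qm n *ᵥ v) ⟨2, by omega⟩ =
      2 * v ⟨2, by omega⟩ + (v ⟨0, by omega⟩ + v ⟨1, by omega⟩) := by
  rw [Matrix.add_mulVec, Pi.add_apply, degMatrix_mulVec_apply, adjMatrix_mulVec_apply,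
    deg2 hn, nb2 hn, Finset.sum_pair (by simp [Fin.ext_iff])]
  norm_num

lemma mulVeci (hn : 6 ≤ n) (i : Fin n) (hi : 3 ≤ i.val) (v : Fin n → ℝ) :
    (Qm n *ᵥ v) i = v i + v ⟨0, by omega⟩ := by
  rw [Matrix.add_mulVec, Pi.add_apply, degMatrix_mulVec_apply, adjMatrix_mulVec_apply,
    degi hn i hi, nbi hn i hi, Finset.sum_singleton]
  norm_num

end
section
variable {n : ℕ} [DecidableRel (Splus n).Adj]

set_option maxHeartbeats 1000000 in
lemma exists_eigvec (hn : 6 ≤ n) (r : ℝ) (hr3 : 3 < r)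
    (hroot : r^3 - ((n:ℝ)+3)*r^2 + 3*(n:ℝ)*r - 4 = 0) :
    ∃ v : Fin n → ℝ, v ≠ 0 ∧ Qm n *ᵥ v = r • v := by
  have p0 : 0 < n := by omega
  have p1 : 1 < n := by omega
  have p2 : 2 < n := by omega
  have p3 : 3 < n := by omega
  have h3 : r - 3 ≠ 0 := sub_ne_zero.2 (ne_of_gt hr3)
  set b : ℝ := (r-1)/(r-3) with hbdef
  have hb : b * (r-3) = r - 1 := div_mul_cancel₀ _ h3
  set v : Fin n → ℝ := fun i =>
    if i = ⟨0, p0⟩ then r - 1 else if i = ⟨1, p1⟩ ∨ i = ⟨2, p2⟩ then b else 1 with hvdef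
  have hv0 : v ⟨0, p0⟩ = r - 1 := by simp [hvdef]
  have hv1 : v ⟨1, p1⟩ = b := by simp [hvdef, Fin.ext_iff]
  have hv2 : v ⟨2, p2⟩ = b := by simp [hvdef, Fin.ext_iff]
  refine ⟨v, ?_, ?_⟩
  · intro h
    have := congrFun h ⟨3, p3⟩
    simp [hvdef, Fin.ext_iff] at this
  · have hsum : ∑ j, v j = (n:ℝ) - 3 + (r-1) + 2*b := by
      have hpt : ∀ j : Fin n, v j = 1 + ((if j = ⟨0, p0⟩ then r - 2 else 0) +
          ((if j = ⟨1, p1⟩ then b - 1 else 0) + (if j = ⟨2, p2⟩ then b - 1 else 0))) := by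
        intro j
        by_cases h0 : j = ⟨0, p0⟩
        · simp [hvdef, h0, Fin.ext_iff]; ring
        · by_cases h1 : j = ⟨1, p1⟩
          · simp [hvdef, h0, h1, Fin.ext_iff]
          · by_cases h2 : j = ⟨2, p2⟩
            · simp [hvdef, h0, h1, h2, Fin.ext_iff]
            · simp [hvdef, h0, h1, h2]
      rw [Finset.sum_congr rfl fun j _ => hpt j, Finset.sum_add_distrib,
        Finset.sum_add_distrib, Finset.sum_add_distrib, Finset.sum_const,
        Finset.sum_ite_eq' univ, Finset.sum_ite_eq' univ, Finset.sum_ite_eq' univ]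
      simp [Finset.card_univ]
      ring
    funext i
    rw [Pi.smul_apply, smul_eq_mul]
    by_cases h0 : i = ⟨0, p0⟩
    · rw [h0, mulVec0 hn v, hsum, hv0]
      have key : (((n:ℝ)-1) * (r-1) + ((n:ℝ) - 3 + (r-1) + 2*b - (r-1)) - r*(r-1)) * (r-3) = 0 := by
        linear_combination 2*hb - hroot
      have := (mul_eq_zero.mp key).resolve_right h3
      linarith
    · by_cases h1 : i = ⟨1, p1⟩
      · rw [h1, mulVec1 hn v, hv0, hv1, hv2]
        linear_combination -hb
      · by_cases h2 : i = ⟨2, p2⟩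
        · rw [h2, mulVec2 hn v, hv0, hv1, hv2]
          linear_combination -hb
        · have hi : 3 ≤ i.val := by
            rcases Nat.lt_or_ge i.val 3 with h | h
            · exfalso
              interval_cases hiv : i.val
              · exact h0 (Fin.ext hiv)
              · exact h1 (Fin.ext hiv)
              · exact h2 (Fin.ext hiv)
            · exact h
          rw [mulVeci hn i hi v, hv0]
          have hvi : v i = 1 := by simp [hvdef, h0, h1, h2]
          rw [hvi]; ring

set_option maxHeartbeats 1000000 in
lemma eig_cubic (hn : 6 ≤ n) (x : ℝ) (hx3 : 3 < x) (v : Fin n → ℝ) (hv : v ≠ 0)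
    (heq : Qm n *ᵥ v = x • v) :
    x^3 - ((n:ℝ)+3)*x^2 + 3*(n:ℝ)*x - 4 = 0 := by
  have p0 : 0 < n := by omega
  have p1 : 1 < n := by omega
  have p2 : 2 < n := by omega
  have h1 : x - 1 ≠ 0 := sub_ne_zero.2 (by linarith)
  have h3 : x - 3 ≠ 0 := sub_ne_zero.2 (ne_of_gt hx3)
  have E : ∀ i, (Qm n *ᵥ v) i = x * v i := fun i => by rw [heq]; simp
  have hvi : ∀ i : Fin n, 3 ≤ i.val → (x-1) * v i = v ⟨0, p0⟩ := by
    intro i hi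
    have := E i
    rw [mulVeci hn i hi v] at this
    linarith
  have E1 := E ⟨1, p1⟩
  rw [mulVec1 hn v] at E1
  have E2 := E ⟨2, p2⟩
  rw [mulVec2 hn v] at E2
  have h12 : v ⟨1, p1⟩ = v ⟨2, p2⟩ := by
    have hz : (x-1) * (v ⟨1, p1⟩ - v ⟨2, p2⟩) = 0 := by linear_combination E2 - E1
    have := (mul_eq_zero.mp hz).resolve_left h1
    linarith
  have hB : (x-3) * v ⟨1, p1⟩ = v ⟨0, p0⟩ := by linear_combination -E1 - h12
  have hv0ne : v ⟨0, p0⟩ ≠ 0 := by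
    intro hz
    apply hv
    funext i
    show v i = 0
    by_cases h0 : i = ⟨0, p0⟩
    · rw [h0, hz]
    · by_cases hi1 : i = ⟨1, p1⟩
      · rw [hi1]
        have : (x-3) * v ⟨1, p1⟩ = 0 := by rw [hB, hz]
        exact (mul_eq_zero.mp this).resolve_left h3
      · by_cases hi2 : i = ⟨2, p2⟩
        · rw [hi2, ← h12]
          have : (x-3) * v ⟨1, p1⟩ = 0 := by rw [hB, hz]
          exact (mul_eq_zero.mp this).resolve_left h3
        · have hi : 3 ≤ i.val := by
            rcases Nat.lt_or_ge i.val 3 with h | h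
            · exfalso
              interval_cases hiv : i.val
              · exact h0 (Fin.ext hiv)
              · exact hi1 (Fin.ext hiv)
              · exact hi2 (Fin.ext hiv)
            · exact h
          have : (x-1) * v i = 0 := by rw [hvi i hi, hz]
          exact (mul_eq_zero.mp this).resolve_left h1
  set s : ℝ := v ⟨0, p0⟩ / (x-1) with hsdef
  have hsv : s * (x-1) = v ⟨0, p0⟩ := div_mul_cancel₀ _ h1
  have hsum : ∑ j, v j = v ⟨0, p0⟩ + v ⟨1, p1⟩ + v ⟨2, p2⟩ + ((n:ℝ) - 3) * s := by
    have hptval : ∀ i : Fin n, 3 ≤ i.val → v i = s := by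
      intro i hi
      have h := hvi i hi
      rw [hsdef, eq_div_iff h1]
      linarith
    have hpt : ∀ j : Fin n, v j = s + ((if j = ⟨0, p0⟩ then v ⟨0, p0⟩ - s else 0) +
        ((if j = ⟨1, p1⟩ then v ⟨1, p1⟩ - s else 0) + (if j = ⟨2, p2⟩ then v ⟨2, p2⟩ - s else 0))) := by
      intro j
      by_cases h0 : j = ⟨0, p0⟩
      · simp [h0, Fin.ext_iff]
      · by_cases hj1 : j = ⟨1, p1⟩
        · simp [h0, hj1, Fin.ext_iff]
        · by_cases hj2 : j = ⟨2, p2⟩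
          · simp [h0, hj1, hj2, Fin.ext_iff]
          · have hi : 3 ≤ j.val := by
              rcases Nat.lt_or_ge j.val 3 with h | h
              · exfalso
                interval_cases hjv : j.val
                · exact h0 (Fin.ext hjv)
                · exact hj1 (Fin.ext hjv)
                · exact hj2 (Fin.ext hjv)
              · exact h
            simp [h0, hj1, hj2, hptval j hi]
    rw [Finset.sum_congr rfl fun j _ => hpt j, Finset.sum_add_distrib,
      Finset.sum_add_distrib, Finset.sum_add_distrib, Finset.sum_const,
      Finset.sum_ite_eq' univ, Finset.sum_ite_eq' univ, Finset.sum_ite_eq' univ]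
    simp [Finset.card_univ]
    ring
  have E0 := E ⟨0, p0⟩
  rw [mulVec0 hn v, hsum] at E0
  have key : (x^3 - ((n:ℝ)+3)*x^2 + 3*(n:ℝ)*x - 4) * s = 0 := by
    linear_combination (-(x-3))*E0 + 2*hB + (-(x-3))*h12 + ((x-3)*(x-((n:ℝ)-1)) - 2)*hsv
  have hsne : s ≠ 0 := fun h => hv0ne (by rw [← hsv, h, zero_mul])
  exact (mul_eq_zero.mp key).resolve_right hsne

end
lemma cubic_strictmono (N : ℝ) (hN : 6 ≤ N) {a b : ℝ} (ha : N ≤ a) (hab : a < b) :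
    a^3 - (N+3)*a^2 + 3*N*a - 4 < b^3 - (N+3)*b^2 + 3*N*b - 4 := by
  have hba : (0:ℝ) < b - a := sub_pos.2 hab
  have haN : (0:ℝ) ≤ a - N := sub_nonneg.2 ha
  have ha0 : (0:ℝ) ≤ a := by linarith
  have hb0 : (0:ℝ) ≤ b := by linarith
  have hb6 : (0:ℝ) ≤ b - 6 := by linarith
  nlinarith [mul_nonneg (mul_nonneg hba.le ha0) haN,
    mul_nonneg (mul_nonneg hba.le hb0) haN,
    mul_nonneg (mul_nonneg hba.le hb0) hb6,
    mul_pos hba (show (0:ℝ) < 3*(b-a) + 3*N by linarith)]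

lemma exists_cubic_root (N : ℝ) (hN : 6 ≤ N) :
    ∃ r : ℝ, (N < r ∧ r < N + 1) ∧ r^3 - (N+3)*r^2 + 3*N*r - 4 = 0 := by
  have hcont : ContinuousOn (fun x : ℝ => x^3 - (N+3)*x^2 + 3*N*x - 4) (Set.Icc N (N+1)) := by
    fun_prop
  have hmem : (0:ℝ) ∈ Set.Ioo (N^3 - (N+3)*N^2 + 3*N*N - 4) ((N+1)^3 - (N+3)*(N+1)^2 + 3*N*(N+1) - 4) := by
    constructor
    · nlinarith
    · nlinarith
  obtain ⟨r, hr, hfr⟩ := intermediate_value_Ioo (by linarith : N ≤ N + 1) hcont hmem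
  exact ⟨r, ⟨hr.1, hr.2⟩, hfr⟩
/-- For `n ≥ 6`, `q(S_{n,1}⁺)` is the largest real root of
`x³ − (n+3)x² + 3nx − 4`, and `n < q(S_{n,1}⁺) < n + 1`. -/
theorem stmt3 (n : ℕ) (hn : 6 ≤ n) :
    ((qrad (Splus n)) ^ 3 - (n + 3) * (qrad (Splus n)) ^ 2
        + 3 * n * (qrad (Splus n)) - 4 = 0) ∧
    (∀ x : ℝ, x ^ 3 - (n + 3) * x ^ 2 + 3 * n * x - 4 = 0 → x ≤ qrad (Splus n)) ∧
    (n : ℝ) < qrad (Splus n) ∧ qrad (Splus n) < n + 1 := by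
  letI := Classical.decRel (Splus n).Adj
  have hN : (6:ℝ) ≤ (n:ℝ) := by exact_mod_cast hn
  obtain ⟨r, ⟨hrn, hrn1⟩, hroot⟩ := exists_cubic_root (n:ℝ) hN
  have hr3 : (3:ℝ) < r := by linarith
  have hlargest : ∀ x : ℝ, x^3 - ((n:ℝ)+3)*x^2 + 3*(n:ℝ)*x - 4 = 0 → x ≤ r := by
    intro x hx
    by_contra h
    push_neg at h
    have := cubic_strictmono (n:ℝ) hN hrn.le h
    rw [hroot, hx] at this
    exact lt_irrefl 0 this
  have hrmem : r ∈ {x : ℝ | (Matrix.charpoly (Qm n)).IsRoot x} :=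
    (my_isRoot_iff _ r).mpr (exists_eigvec hn r hr3 hroot)
  have hub : ∀ x ∈ {x : ℝ | (Matrix.charpoly (Qm n)).IsRoot x}, x ≤ r := by
    intro x hx
    obtain ⟨v, hv, hQ⟩ := (my_isRoot_iff _ x).mp hx
    by_cases h3 : 3 < x
    · exact hlargest x (eig_cubic hn x h3 v hv hQ)
    · push_neg at h3; linarith
  have hq : qrad (Splus n) = r := by
    have hqdef : qrad (Splus n) = sSup {x : ℝ | (Matrix.charpoly (Qm n)).IsRoot x} := rfl
    rw [hqdef]
    exact le_antisymm (csSup_le ⟨r, hrmem⟩ hub) (le_csSup ⟨r, fun x hx => hub x hx⟩ hrmem)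
  rw [hq]
  exact ⟨hroot, hlargest, hrn, hrn1⟩
end

section
/- Let G be a simple graph on n ≥ 6 vertices whose signless Laplacian spectral radius satisfies q(G) > n + 2 − 4/(n+1), and let u be a vertex of G with 3 ≤ d(u) ≤ n − 2 such that q(G) ≤ d(u) + (1/d(u)) · Σ_{w ∈ N(u)} d(w). Then the number of edges of the subgraph of G induced by N(u) is at least d(u) − 1. -/
open SimpleGraph Finset

def indG {n : ℕ} (G : SimpleGraph (Fin n)) (s : Finset (Fin n)) : SimpleGraph (Fin n) where
  Adj a b := G.Adj a b ∧ a ∈ s ∧ b ∈ s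
  symm := ⟨fun a b h => ⟨h.1.symm, h.2.2, h.2.1⟩⟩
  loopless := ⟨fun a h => (G.ne_of_adj h.1) rfl⟩

instance {n : ℕ} (G : SimpleGraph (Fin n)) [DecidableRel G.Adj] (s : Finset (Fin n)) :
    DecidableRel (indG G s).Adj := fun _ _ => instDecidableAnd

lemma edgesIn_eq {n : ℕ} (G : SimpleGraph (Fin n)) [DecidableRel G.Adj] (s : Finset (Fin n)) :
    edgesIn G ↑s = (indG G s).edgeFinset.card := by
  have hset : {e | e ∈ G.edgeSet ∧ ∀ v ∈ e, v ∈ (↑s : Set (Fin n))} = (indG G s).edgeSet := by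
    ext e
    induction e using Sym2.ind with
    | _ a b =>
      simp only [Set.mem_setOf_eq, mem_edgeSet, Sym2.mem_iff, indG]
      constructor
      · rintro ⟨h, hv⟩
        exact ⟨h, hv a (Or.inl rfl), hv b (Or.inr rfl)⟩
      · rintro ⟨h, ha, hb⟩
        exact ⟨h, fun v hv => by rcases hv with rfl | rfl <;> assumption⟩
  rw [edgesIn, hset, ← SimpleGraph.coe_edgeFinset, Set.ncard_coe_finset]

lemma degree_indG {n : ℕ} (G : SimpleGraph (Fin n)) [DecidableRel G.Adj]
    (s : Finset (Fin n)) (w : Fin n) (hw : w ∈ s) :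
    (indG G s).degree w = (G.neighborFinset w ∩ s).card := by
  rw [← card_neighborFinset_eq_degree]
  congr 1
  ext v
  rw [mem_neighborFinset]
  simp [indG, mem_neighborFinset, hw]

/-- If `q(G) > n + 2 − 4/(n+1)` and `u` is a vertex with `3 ≤ d(u) ≤ n − 2`
such that `q(G) ≤ d(u) + (1/d(u)) ∑_{w ∈ N(u)} d(w)`, then the induced
subgraph `G[N(u)]` has at least `d(u) − 1` edges. -/
theorem stmt4 (n : ℕ) (hn : 6 ≤ n) (G : SimpleGraph (Fin n)) [DecidableRel G.Adj]
    (u : Fin n)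
    (hq : (n : ℝ) + 2 - 4 / ((n : ℝ) + 1) < qrad G)
    (hd3 : 3 ≤ G.degree u) (hdn : G.degree u ≤ n - 2)
    (hub : qrad G ≤ (G.degree u : ℝ) +
      (1 / (G.degree u : ℝ)) * ∑ w ∈ G.neighborFinset u, (G.degree w : ℝ)) :
    G.degree u - 1 ≤ edgesIn G (G.neighborSet u) := by
  have hd : (G.neighborFinset u).card = G.degree u := G.card_neighborFinset_eq_degree u
  set s := G.neighborFinset u with hs
  set d := G.degree u with hdd
  set H := indG G s with hH
  set E := H.edgeFinset.card with hE
  have hdn' : d ≤ n := le_trans hdn (Nat.sub_le n 2)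
  -- combinatorial bound
  have hdeg : ∀ w ∈ s, G.degree w ≤ H.degree w + (n - d) := by
    intro w hw
    have h4 : H.degree w = (G.neighborFinset w ∩ s).card := degree_indG G s w hw
    have h1 := Finset.card_inter_add_card_sdiff (G.neighborFinset w) s
    have h2 : (G.neighborFinset w \ s).card ≤ n - d := by
      have hsub : G.neighborFinset w \ s ⊆ Finset.univ \ s := by
        intro v hv
        simp only [Finset.mem_sdiff, Finset.mem_univ, true_and] at hv ⊢
        exact hv.2
      calc (G.neighborFinset w \ s).card ≤ (Finset.univ \ s).card :=
            Finset.card_le_card hsub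
        _ = n - d := by
            rw [Finset.card_sdiff_of_subset (Finset.subset_univ s), Finset.card_univ, Fintype.card_fin, hd]
    have h3 : (G.neighborFinset w).card = G.degree w := G.card_neighborFinset_eq_degree w
    omega
  have hsum : ∑ w ∈ s, G.degree w ≤ 2 * E + d * (n - d) := by
    calc ∑ w ∈ s, G.degree w ≤ ∑ w ∈ s, (H.degree w + (n - d)) := Finset.sum_le_sum hdeg
      _ = (∑ w ∈ s, H.degree w) + s.card * (n - d) := by
          rw [Finset.sum_add_distrib, Finset.sum_const, smul_eq_mul]
      _ ≤ (∑ w, H.degree w) + d * (n - d) := by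
          rw [hd]
          gcongr
          exact Finset.subset_univ s
      _ = 2 * E + d * (n - d) := by rw [H.sum_degrees_eq_twice_card_edges]
  -- move to the reals
  have hS : (∑ w ∈ s, (G.degree w : ℝ)) ≤ 2 * E + d * ((n : ℝ) - d) := by
    have h' : ((∑ w ∈ s, G.degree w : ℕ) : ℝ) ≤ ((2 * E + d * (n - d) : ℕ) : ℝ) :=
      Nat.cast_le.2 hsum
    push_cast [Nat.cast_sub hdn'] at h'
    linarith
  have hd0 : (0 : ℝ) < d := by exact_mod_cast lt_of_lt_of_le (by norm_num) hd3
  have key : (n : ℝ) + 2 - 4 / ((n : ℝ) + 1) < d + (1 / d) * (2 * E + d * ((n : ℝ) - d)) := by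
    refine hq.trans_le (hub.trans ?_)
    gcongr
  -- suppose the conclusion fails
  have hns : G.neighborSet u = ↑s := by rw [hs, neighborFinset_def, Set.coe_toFinset]
  rw [hns, edgesIn_eq]
  change d - 1 ≤ E
  by_contra hcon
  push_neg at hcon
  have hE2 : (E : ℝ) ≤ (d : ℝ) - 2 := by
    have : E ≤ d - 2 := by omega
    have h' : (E : ℝ) ≤ ((d - 2 : ℕ) : ℝ) := Nat.cast_le.2 this
    push_cast [Nat.cast_sub (by omega : 2 ≤ d)] at h'
    linarith
  have hdn2 : (d : ℝ) ≤ (n : ℝ) - 2 := by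
    have h' : (d : ℝ) ≤ ((n - 2 : ℕ) : ℝ) := Nat.cast_le.2 hdn
    push_cast [Nat.cast_sub (by omega : 2 ≤ n)] at h'
    linarith
  have hn1 : (0 : ℝ) < (n : ℝ) + 1 := by positivity
  have h1 := mul_lt_mul_of_pos_right key hd0
  have h2 : ((d : ℝ) + (1 / d) * (2 * E + d * ((n : ℝ) - d))) * d
      = d * d + 2 * E + d * ((n : ℝ) - d) := by
    field_simp
    ring
  rw [h2] at h1
  have h4 : 2 * (d : ℝ) - (4 / ((n : ℝ) + 1)) * d < 2 * E := by linarith [h1]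
  have h5 := mul_lt_mul_of_pos_right h4 hn1
  have h6 : (2 * (d : ℝ) - 4 / ((n : ℝ) + 1) * d) * ((n : ℝ) + 1)
      = 2 * d * ((n : ℝ) + 1) - 4 * d := by
    field_simp
  rw [h6] at h5
  nlinarith [mul_le_mul_of_nonneg_right hE2 (le_of_lt hn1)]
end

section
/- Let n ≥ 4 with n ≡ 1 (mod 3). Then the signless Laplacian spectral radius of the join K₁ ∨ ((n−1)/3)K₃ (one vertex joined to all vertices of (n−1)/3 disjoint triangles) equals (n + 4 + √((n−4)² + 16))/2. -/
open SimpleGraph Finset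

/-! ### Auxiliary material for `stmt5` -/

set_option linter.unusedSectionVars false

open Matrix Polynomial in
lemma JK3.eval_charpoly' {m : ℕ} (M : Matrix (Fin m) (Fin m) ℝ) (x : ℝ) :
    M.charpoly.eval x = (Matrix.diagonal (fun _ => x) - M).det := by
  rw [Matrix.charpoly, ← Polynomial.coe_evalRingHom, RingHom.map_det]
  congr 1
  ext i j
  by_cases h : i = j <;> simp [Matrix.charmatrix_apply, h, Matrix.diagonal]

open Matrix Polynomial in
lemma JK3.isRoot_iff {m : ℕ} (M : Matrix (Fin m) (Fin m) ℝ) (x : ℝ) :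
    M.charpoly.IsRoot x ↔ ∃ v : Fin m → ℝ, v ≠ 0 ∧ M *ᵥ v = x • v := by
  rw [Polynomial.IsRoot, JK3.eval_charpoly', ← Matrix.exists_mulVec_eq_zero_iff]
  constructor
  · rintro ⟨v, hv, h⟩
    refine ⟨v, hv, ?_⟩
    rw [Matrix.sub_mulVec] at h
    funext i
    have := congrFun h i
    simp only [Pi.sub_apply, Pi.zero_apply, sub_eq_zero, mulVec_diagonal] at this
    simpa [Pi.smul_apply, smul_eq_mul] using this.symm
  · rintro ⟨v, hv, h⟩
    refine ⟨v, hv, ?_⟩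
    rw [Matrix.sub_mulVec, h]
    funext i
    simp [mulVec_diagonal]

namespace JK3

/-- the candidate spectral radius -/
noncomputable def rr (n : ℝ) : ℝ := (n + 4 + Real.sqrt ((n - 4) ^ 2 + 16)) / 2

lemma hs (n : ℝ) : (Real.sqrt ((n - 4) ^ 2 + 16)) ^ 2 = (n - 4) ^ 2 + 16 :=
  Real.sq_sqrt (by positivity)

lemma rr_quad (n : ℝ) : (rr n) ^ 2 - (n + 4) * rr n + 4 * (n - 1) = 0 := by
  have h := hs n
  unfold rr
  nlinarith [h]

lemma rr_gt5 (n : ℝ) (hn : 4 ≤ n) : 5 < rr n := by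
  have h := hs n
  have h0 := Real.sqrt_nonneg ((n - 4) ^ 2 + 16)
  unfold rr
  nlinarith [sq_nonneg (Real.sqrt ((n - 4) ^ 2 + 16) - 4), sq_nonneg (n-4)]

lemma quad_le (n : ℝ) (x : ℝ) (hx : x ^ 2 - (n + 4) * x + 4 * (n - 1) = 0) : x ≤ rr n := by
  have h := hs n
  have h0 := Real.sqrt_nonneg ((n - 4) ^ 2 + 16)
  unfold rr
  nlinarith [sq_nonneg (2*x - (n+4) - Real.sqrt ((n - 4) ^ 2 + 16)),
    sq_nonneg (2*x - (n+4) + Real.sqrt ((n - 4) ^ 2 + 16))]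

lemma joinK3s_adj {n : ℕ} (i j : Fin n) :
    (joinK3s n).Adj i j ↔ i ≠ j ∧ (i.val = 0 ∨ j.val = 0 ∨ (i.val - 1) / 3 = (j.val - 1) / 3) := by
  simp only [joinK3s, SimpleGraph.fromRel_adj]
  constructor
  · rintro ⟨h, h2 | h2⟩ <;> tauto
  · rintro ⟨h, h2 | h2 | h2⟩ <;> tauto

section
open Matrix Polynomial
variable {n k : ℕ} (hn : n = 3 * k + 1)

/-- the triangle with index `t` -/
def tri (n t : ℕ) : Finset (Fin n) := univ.filter (fun j => j.val ≠ 0 ∧ (j.val - 1) / 3 = t)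

include hn in
lemma tri_eq (t : ℕ) (ht : t < k) :
    tri n t = {⟨3*t+1, by omega⟩, ⟨3*t+2, by omega⟩, ⟨3*t+3, by omega⟩} := by
  ext j
  simp only [tri, mem_filter, mem_univ, true_and, mem_insert, mem_singleton, Fin.ext_iff]
  omega

include hn in
lemma tri_card (t : ℕ) (ht : t < k) : (tri n t).card = 3 := by
  rw [tri_eq hn t ht]
  rw [card_insert_of_notMem (by simp [Fin.ext_iff]),
      card_insert_of_notMem (by simp [Fin.ext_iff]), card_singleton]

include hn in
lemma tri_sum (t : ℕ) (ht : t < k) (v : Fin n → ℝ) :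
    ∑ j ∈ tri n t, v j = v ⟨3*t+1, by omega⟩ + v ⟨3*t+2, by omega⟩ + v ⟨3*t+3, by omega⟩ := by
  rw [tri_eq hn t ht]
  rw [sum_insert (by simp [Fin.ext_iff]), sum_insert (by simp [Fin.ext_iff]),
      sum_singleton, add_assoc]

lemma mem_tri (i : Fin n) (hi : i.val ≠ 0) : i ∈ tri n ((i.val - 1)/3) := by
  simp [tri, hi]

include hn in
lemma tri_lt (i : Fin n) (hi : i.val ≠ 0) : (i.val - 1)/3 < k := by
  have := i.isLt; omega

include hn in
lemma nbhd_zero [DecidableRel (joinK3s n).Adj] (i : Fin n) (hi : i.val = 0) :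
    (joinK3s n).neighborFinset i = univ.erase i := by
  ext j
  simp only [mem_neighborFinset, joinK3s_adj, mem_erase, mem_univ, and_true, ne_eq,
    Fin.ext_iff, hi, true_or]
  omega

include hn in
lemma nbhd_ne [DecidableRel (joinK3s n).Adj] (i : Fin n) (hi : i.val ≠ 0) :
    (joinK3s n).neighborFinset i
      = insert ⟨0, by omega⟩ ((tri n ((i.val - 1)/3)).erase i) := by
  ext j
  simp only [mem_neighborFinset, joinK3s_adj, mem_insert, mem_erase, tri, mem_filter,
    mem_univ, true_and, Fin.ext_iff, ne_eq]
  omega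

include hn in
lemma sum_fiber (v : Fin n → ℝ) (z : Fin n) (hz : z.val = 0) :
    ∑ j ∈ univ.erase z, v j = ∑ t ∈ Finset.range k, ∑ j ∈ tri n t, v j := by
  have h1 : ∀ t, tri n t = (univ.erase z).filter (fun j => (j.val - 1) / 3 = t) := by
    intro t
    ext j
    simp only [tri, mem_filter, mem_erase, mem_univ, true_and, and_true, Fin.ext_iff, hz, ne_eq]
  simp_rw [h1]
  refine (Finset.sum_fiberwise_of_maps_to (fun j hj => Finset.mem_range.mpr ?_) v).symm
  have := j.isLt
  simp only [mem_erase, ne_eq, Fin.ext_iff, hz] at hj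
  omega

variable [DecidableRel (joinK3s n).Adj]

include hn in
lemma deg_zero (i : Fin n) (hi : i.val = 0) : (joinK3s n).degree i = n - 1 := by
  rw [← SimpleGraph.card_neighborFinset_eq_degree, nbhd_zero hn i hi,
    Finset.card_erase_of_mem (Finset.mem_univ i), Finset.card_univ, Fintype.card_fin]

include hn in
lemma deg_ne (i : Fin n) (hi : i.val ≠ 0) : (joinK3s n).degree i = 3 := by
  rw [← SimpleGraph.card_neighborFinset_eq_degree, nbhd_ne hn i hi]
  rw [Finset.card_insert_of_notMem (by simp [tri, Fin.ext_iff])]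
  rw [Finset.card_erase_of_mem (mem_tri i hi), tri_card hn _ (tri_lt hn i hi)]

include hn in
lemma row_zero (v : Fin n → ℝ) (i : Fin n) (hi : i.val = 0) :
    (((joinK3s n).degMatrix ℝ + (joinK3s n).adjMatrix ℝ) *ᵥ v) i
      = ((n : ℝ) - 1) * v i + ∑ t ∈ Finset.range k, ∑ j ∈ tri n t, v j := by
  rw [Matrix.add_mulVec, Pi.add_apply, SimpleGraph.degMatrix_mulVec_apply,
    SimpleGraph.adjMatrix_mulVec_apply, deg_zero hn i hi, nbhd_zero hn i hi,
    sum_fiber hn v i hi]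
  congr 1
  congr 1
  have : (1:ℕ) ≤ n := by omega
  push_cast [this]
  ring

include hn in
lemma row_ne (v : Fin n → ℝ) (i : Fin n) (hi : i.val ≠ 0) :
    (((joinK3s n).degMatrix ℝ + (joinK3s n).adjMatrix ℝ) *ᵥ v) i
      = 3 * v i + (v ⟨0, by omega⟩ + ((∑ j ∈ tri n ((i.val - 1)/3), v j) - v i)) := by
  rw [Matrix.add_mulVec, Pi.add_apply, SimpleGraph.degMatrix_mulVec_apply,
    SimpleGraph.adjMatrix_mulVec_apply, deg_ne hn i hi, nbhd_ne hn i hi,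
    Finset.sum_insert (by simp [tri, Fin.ext_iff]),
    Finset.sum_erase_eq_sub (mem_tri i hi)]
  norm_num

include hn in
lemma key (hk : 1 ≤ k) :
    IsGreatest {x : ℝ | (Matrix.charpoly ((joinK3s n).degMatrix ℝ + (joinK3s n).adjMatrix ℝ)).IsRoot x}
      (rr (n : ℝ)) := by
  have hn4 : (4:ℝ) ≤ (n:ℝ) := by
    have : 4 ≤ n := by omega
    exact_mod_cast this
  have hnk : (n : ℝ) = 3 * (k : ℝ) + 1 := by exact_mod_cast congrArg (Nat.cast : ℕ → ℝ) hn
  have hr5 : 5 < rr (n:ℝ) := rr_gt5 _ hn4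
  have hq := rr_quad (n : ℝ)
  set r := rr (n : ℝ) with hrdef
  constructor
  · -- membership : r is a root
    rw [Set.mem_setOf_eq, JK3.isRoot_iff]
    set v : Fin n → ℝ := fun j => if j.val = 0 then r - 5 else 1 with hvdef
    refine ⟨v, ?_, ?_⟩
    · intro h0
      have := congrFun h0 ⟨1, by omega⟩
      simp [hvdef] at this
    · funext i
      have hsum3 : ∀ t ∈ Finset.range k, ∑ j ∈ tri n t, v j = 3 := by
        intro t ht
        rw [tri_sum hn t (Finset.mem_range.mp ht)]
        norm_num [hvdef]
      by_cases hi : i.val = 0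
      · rw [row_zero hn v i hi, Finset.sum_congr rfl hsum3, Finset.sum_const,
          Finset.card_range, Pi.smul_apply, smul_eq_mul]
        have hvi : v i = r - 5 := by simp [hvdef, hi]
        rw [hvi, nsmul_eq_mul]
        linear_combination (-1 : ℝ) * hq - hnk
      · rw [row_ne hn v i hi, Pi.smul_apply, smul_eq_mul]
        have hvi : v i = 1 := by simp [hvdef, hi]
        have hvz : v ⟨0, by omega⟩ = r - 5 := by simp [hvdef]
        rw [hvi, hvz, hsum3 _ (Finset.mem_range.mpr (tri_lt hn i hi))]
        ring
  · -- upper bound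
    rintro x hx
    by_contra hxr
    push_neg at hxr
    have hx5 : 5 < x := lt_trans hr5 hxr
    rw [Set.mem_setOf_eq, JK3.isRoot_iff] at hx
    obtain ⟨v, hv, hQv⟩ := hx
    set z : Fin n := ⟨0, by omega⟩ with hzdef
    have rownz : ∀ (j : Fin n), j.val ≠ 0 → ∀ t : ℕ, (j.val - 1)/3 = t →
        x * v j = 3 * v j + (v z + ((∑ j' ∈ tri n t, v j') - v j)) := by
      intro j hj t htj
      have h := congrFun hQv j
      rw [row_ne hn v j hj, htj] at h
      simpa [Pi.smul_apply, smul_eq_mul] using h.symm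
    have hS : ∀ t, t < k → (x - 5) * (∑ j ∈ tri n t, v j) = 3 * v z := by
      intro t ht
      have e1 := rownz ⟨3*t+1, by omega⟩ (by simp only [Fin.val_mk]; omega) t
        (by simp only [Fin.val_mk]; omega)
      have e2 := rownz ⟨3*t+2, by omega⟩ (by simp only [Fin.val_mk]; omega) t
        (by simp only [Fin.val_mk]; omega)
      have e3 := rownz ⟨3*t+3, by omega⟩ (by simp only [Fin.val_mk]; omega) t
        (by simp only [Fin.val_mk]; omega)
      rw [tri_sum hn t ht] at e1 e2 e3 ⊢
      linarith
    have hrowz : x * v z = ((n:ℝ) - 1) * v z + ∑ t ∈ Finset.range k, ∑ j ∈ tri n t, v j := by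
      have h := congrFun hQv z
      rw [row_zero hn v z rfl] at h
      simpa [Pi.smul_apply, smul_eq_mul] using h.symm
    have hsumS : (x - 5) * (∑ t ∈ Finset.range k, ∑ j ∈ tri n t, v j) = ((n:ℝ) - 1) * v z := by
      rw [Finset.mul_sum, Finset.sum_congr rfl (fun t ht => hS t (Finset.mem_range.mp ht)),
        Finset.sum_const, Finset.card_range, nsmul_eq_mul]
      linear_combination (-(v z)) * hnk
    have hfactor : v z * (x ^ 2 - ((n:ℝ) + 4) * x + 4 * ((n:ℝ) - 1)) = 0 := by
      linear_combination (x - 5) * hrowz + hsumS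
    rcases mul_eq_zero.mp hfactor with hvz | hquad
    · -- v z = 0  → v = 0, contradiction
      have hSt0 : ∀ t, t < k → (∑ j ∈ tri n t, v j) = 0 := by
        intro t ht
        have h := hS t ht
        rw [hvz, mul_zero] at h
        exact (mul_eq_zero.mp h).resolve_left (by linarith)
      apply hv
      funext j
      by_cases hj : j.val = 0
      · have : j = z := by simp [hzdef, Fin.ext_iff, hj]
        rw [this, hvz]; rfl
      · have e := rownz j hj _ rfl
        rw [hSt0 _ (tri_lt hn j hj), hvz] at e
        have : (x - 2) * v j = 0 := by linarith
        have hx2 : x - 2 ≠ 0 := by linarith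
        have := (mul_eq_zero.mp this).resolve_left hx2
        rw [this]; rfl
    · exact hxr.not_ge (quad_le _ _ hquad)

end
end JK3

/-- For `n ≥ 4` with `n ≡ 1 (mod 3)`,
`q(K₁ ∨ ((n−1)/3)K₃) = (n + 4 + √((n−4)² + 16))/2`. -/
theorem stmt5 (n : ℕ) (hn : 4 ≤ n) (h3 : n % 3 = 1) :
    qrad (joinK3s n) = ((n : ℝ) + 4 + Real.sqrt (((n : ℝ) - 4) ^ 2 + 16)) / 2 := by
  have hk : n = 3 * (n / 3) + 1 := by omega
  have hk1 : 1 ≤ n / 3 := by omega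
  unfold qrad
  letI := Classical.decRel (joinK3s n).Adj
  exact (JK3.key hk hk1).csSup_eq
end

section
/- Let G be a simple graph that is θ(1,2,3)-free. Then for every vertex u of G, the subgraph of G induced by the neighborhood N(u) contains no path on 4 vertices. -/
open SimpleGraph Finset

/-- In a θ(1,2,3)-free graph, the neighborhood of any vertex induces no path
on 4 vertices. -/
theorem stmt8 {V : Type*} (G : SimpleGraph V) (hfree : ¬ contains theta123 G)
    (u a b c d : V) (ha : G.Adj u a) (hb : G.Adj u b) (hc : G.Adj u c)
    (hd : G.Adj u d) (hac : a ≠ c) (had : a ≠ d) (hbd : b ≠ d)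
    (hab : G.Adj a b) (hbc : G.Adj b c) (hcd : G.Adj c d) : False := by
  apply hfree
  refine ⟨![u, b, a, d, c], ?_, ?_⟩
  · intro i j hij
    fin_cases i <;> fin_cases j <;>
      simp only [Matrix.cons_val_zero, Matrix.cons_val_one, Matrix.head_cons,
        Matrix.cons_val_fin_one, Fin.mk_zero, Fin.mk_one] at hij <;>
      first
      | rfl
      | exact absurd hij ha.ne'
      | exact absurd hij hb.ne'
      | exact absurd hij hc.ne'
      | exact absurd hij hd.ne'
      | exact absurd hij.symm ha.ne'
      | exact absurd hij.symm hb.ne'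
      | exact absurd hij.symm hc.ne'
      | exact absurd hij.symm hd.ne'
      | exact absurd hij hab.ne
      | exact absurd hij.symm hab.ne
      | exact absurd hij hbc.ne
      | exact absurd hij.symm hbc.ne
      | exact absurd hij hcd.ne
      | exact absurd hij.symm hcd.ne
      | exact absurd hij hac
      | exact absurd hij.symm hac
      | exact absurd hij had
      | exact absurd hij.symm had
      | exact absurd hij hbd
      | exact absurd hij.symm hbd
  · intro i j hij
    fin_cases i <;> fin_cases j <;>
      simp only [theta123, SimpleGraph.fromEdgeSet_adj, Set.mem_insert_iff,
        Set.mem_singleton_iff, Sym2.eq, Sym2.rel_iff', Prod.mk.injEq, Prod.swap_prod_mk,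
        ne_eq, Fin.mk.injEq] at hij <;>
      first
      | exact hb
      | exact hb.symm
      | exact ha
      | exact ha.symm
      | exact hd
      | exact hd.symm
      | exact hab
      | exact hab.symm
      | exact hbc
      | exact hbc.symm
      | exact hcd
      | exact hcd.symm
      | exact absurd hij (by decide)
end

section
/- Let G be a simple graph that is θ(1,2,3)-free, let u be a vertex of G, and let x, y, z be three vertices of N(u) that form a triangle in G. Then every vertex w of G outside N(u) ∪ {u} is adjacent to at most one of x, y, z. -/
open SimpleGraph Finset

lemma build_theta123 {V : Type*} (G : SimpleGraph V) (v0 v1 v2 v3 v4 : V)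
    (h01 : G.Adj v0 v1) (h02 : G.Adj v0 v2) (h21 : G.Adj v2 v1)
    (h03 : G.Adj v0 v3) (h34 : G.Adj v3 v4) (h41 : G.Adj v4 v1)
    (d04 : v0 ≠ v4) (d13 : v1 ≠ v3) (d23 : v2 ≠ v3) (d24 : v2 ≠ v4) :
    contains theta123 G := by
  refine ⟨![v0, v1, v2, v3, v4], ?_, ?_⟩
  · have d01 := h01.ne
    have d02 := h02.ne
    have d12 := h21.ne.symm
    have d03 := h03.ne
    have d34 := h34.ne
    have d14 := h41.ne.symm
    intro a b hab
    fin_cases a <;> fin_cases b <;> simp_all <;> first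
      | rfl
      | (exact absurd hab.symm (by assumption))
      | (exact absurd hab (by assumption))
  · intro a b hab
    fin_cases a <;> fin_cases b <;>
      simp_all [theta123, SimpleGraph.fromEdgeSet_adj, Sym2.eq, Sym2.rel_iff] <;>
      first
        | exact h01 | exact h01.symm | exact h02 | exact h02.symm
        | exact h21 | exact h21.symm | exact h03 | exact h03.symm
        | exact h34 | exact h34.symm | exact h41 | exact h41.symm

/-- In a θ(1,2,3)-free graph, if `x, y, z ∈ N(u)` form a triangle, then every
vertex `w ∉ N(u) ∪ {u}` is adjacent to at most one of `x, y, z`. -/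
theorem stmt11 {V : Type*} (G : SimpleGraph V) (hfree : ¬ contains theta123 G)
    (u x y z : V) (hx : G.Adj u x) (hy : G.Adj u y) (hz : G.Adj u z)
    (hxy : G.Adj x y) (hyz : G.Adj y z) (hxz : G.Adj x z)
    (w : V) (hw1 : ¬ G.Adj u w) (hw2 : w ≠ u) :
    ¬ (G.Adj w x ∧ G.Adj w y) ∧ ¬ (G.Adj w x ∧ G.Adj w z) ∧
      ¬ (G.Adj w y ∧ G.Adj w z) := by
  
  have hwx_u : G.Adj w x → w ≠ x := fun _ => fun h => hw1 (h ▸ hx)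
  refine ⟨?_, ?_, ?_⟩
  · rintro ⟨hwx, hwy⟩
    exact hfree (build_theta123 G x y w u z hxy hwx.symm hwy hx.symm hz hyz.symm
      hxz.ne (fun h => hy.ne h.symm) (fun h => hw2 h) (fun h => hw1 (h ▸ hz)))
  · rintro ⟨hwx, hwz⟩
    exact hfree (build_theta123 G x z w u y hxz hwx.symm hwz hx.symm hy hyz
      hxy.ne (fun h => hz.ne h.symm) (fun h => hw2 h) (fun h => hw1 (h ▸ hy)))
  · rintro ⟨hwy, hwz⟩
    exact hfree (build_theta123 G y z w u x hyz hwy.symm hwz hy.symm hx hxz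
      hxy.ne.symm (fun h => hz.ne h.symm) (fun h => hw2 h) (fun h => hw1 (h ▸ hx)))
end

section
/- Let G be a θ(1,2,2)-free simple graph on n vertices containing a vertex of degree n − 1. Then G is isomorphic to a subgraph of F_n. -/
open SimpleGraph Finset

lemma embed_aux (n : ℕ) (G : SimpleGraph (Fin n)) (v : Fin n) (pt : Fin n → Fin n)
    (m uc : ℕ) (eI uI : Fin n → ℕ)
    (hn : 1 ≤ n)
    (hcard : 2 * m + uc ≤ n - 1)
    (hpt2 : ∀ x y, x ≠ v → y ≠ v → G.Adj x y → pt x = y)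
    (heIlt : ∀ x, x ≠ v → (∃ y, y ≠ v ∧ G.Adj x y) → eI x < m)
    (heIinj : ∀ x y, x ≠ v → y ≠ v → (∃ z, z ≠ v ∧ G.Adj x z) → (∃ z, z ≠ v ∧ G.Adj y z) →
      eI x = eI y → s(x, pt x) = s(y, pt y))
    (heIeq : ∀ a b, a ≠ v → b ≠ v → G.Adj a b → eI a = eI b)
    (huIlt : ∀ x, x ≠ v → ¬(∃ y, y ≠ v ∧ G.Adj x y) → uI x < uc)
    (huIinj : ∀ x y, x ≠ v → y ≠ v → ¬(∃ z, z ≠ v ∧ G.Adj x z) → ¬(∃ z, z ≠ v ∧ G.Adj y z) →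
      uI x = uI y → x = y) :
    contains G (friendship n) := by
  classical
  set fv : Fin n → ℕ := fun x =>
    if x = v then 0
    else if ∃ y, y ≠ v ∧ G.Adj x y then 2 * eI x + (if x < pt x then 1 else 2)
    else 2 * m + 1 + uI x with hfv
  have hbound : ∀ x, fv x < n := by
    intro x
    simp only [hfv]
    split
    · omega
    · rename_i hx
      split
      · rename_i h
        have := heIlt x hx h
        split <;> omega
      · rename_i h
        have := huIlt x hx h
        omega
  refine ⟨fun x => ⟨fv x, hbound x⟩, ?_, ?_⟩
  · intro x y hxy
    have hval : fv x = fv y := congrArg Fin.val hxy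
    by_cases hx : x = v <;> by_cases hy2 : y = v
    · rw [hx, hy2]
    · exfalso
      simp only [hfv, if_pos hx, if_neg hy2] at hval
      split at hval
      · split at hval <;> omega
      · omega
    · exfalso
      simp only [hfv, if_neg hx, if_pos hy2] at hval
      split at hval
      · split at hval <;> omega
      · omega
    · simp only [hfv, if_neg hx, if_neg hy2] at hval
      by_cases hmx : ∃ z, z ≠ v ∧ G.Adj x z <;> by_cases hmy : ∃ z, z ≠ v ∧ G.Adj y z
      · rw [if_pos hmx, if_pos hmy] at hval
        have heq : eI x = eI y ∧ ((x < pt x) ↔ (y < pt y)) := by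
          by_cases c1 : x < pt x <;> by_cases c2 : y < pt y <;>
            simp only [c1, c2, if_true, if_false] at hval
          · exact ⟨by omega, iff_of_true c1 c2⟩
          · omega
          · omega
          · exact ⟨by omega, iff_of_false c1 c2⟩
        have hedgeq := heIinj x y hx hy2 hmx hmy heq.1
        rw [Sym2.eq_iff] at hedgeq
        rcases hedgeq with ⟨h3, -⟩ | ⟨h3, h4⟩
        · exact h3
        · rcases lt_trichotomy x y with hlt | hlt | hlt
          · exfalso
            have hxx : x < pt x := by rw [h4]; exact hlt
            have hyy : y < pt y := heq.2.mp hxx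
            rw [← h3] at hyy
            exact absurd hlt (not_lt_of_gt hyy)
          · exact hlt
          · exfalso
            have hyy : y < pt y := by rw [← h3]; exact hlt
            have hxx : x < pt x := heq.2.mpr hyy
            rw [h4] at hxx
            exact absurd hlt (not_lt_of_gt hxx)
      · exfalso
        rw [if_pos hmx, if_neg hmy] at hval
        have := heIlt x hx hmx
        split at hval <;> omega
      · exfalso
        rw [if_neg hmx, if_pos hmy] at hval
        have := heIlt y hy2 hmy
        split at hval <;> omega
      · rw [if_neg hmx, if_neg hmy] at hval
        exact huIinj x y hx hy2 hmx hmy (by omega)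
  · intro a b hab
    have hne : a ≠ b := hab.ne
    have hfv_a : (⟨fv a, hbound a⟩ : Fin n).val = fv a := rfl
    by_cases ha : a = v
    · have hb : b ≠ v := fun h => G.irrefl ((ha ▸ h ▸ hab))
      have h0 : fv a = 0 := by simp [hfv, ha]
      have h1 : fv b ≠ 0 := by
        simp only [hfv, if_neg hb]
        split
        · split <;> omega
        · omega
      refine (SimpleGraph.fromRel_adj _ _ _).mpr ⟨?_, Or.inl (Or.inl h0)⟩
      intro h
      have hval : fv a = fv b := congrArg Fin.val h
      exact h1 (hval.symm.trans h0)
    · by_cases hb : b = v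
      · have h0 : fv b = 0 := by simp [hfv, hb]
        have h1 : fv a ≠ 0 := by
          simp only [hfv, if_neg ha]
          split
          · split <;> omega
          · omega
        refine (SimpleGraph.fromRel_adj _ _ _).mpr ⟨?_, Or.inr (Or.inl h0)⟩
        intro h
        have hval : fv a = fv b := congrArg Fin.val h
        exact h1 (hval.trans h0)
      · have hma : ∃ y, y ≠ v ∧ G.Adj a y := ⟨b, hb, hab⟩
        have hmb : ∃ y, y ≠ v ∧ G.Adj b y := ⟨a, ha, hab.symm⟩
        have hpa : pt a = b := hpt2 a b ha hb hab
        have hpb : pt b = a := hpt2 b a hb ha hab.symm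
        have heidx : eI a = eI b := heIeq a b ha hb hab
        have hva : fv a = 2 * eI a + (if a < b then 1 else 2) := by
          simp only [hfv, if_neg ha, if_pos hma, hpa]
        have hvb : fv b = 2 * eI a + (if b < a then 1 else 2) := by
          simp only [hfv, if_neg hb, if_pos hmb, hpb, heidx]
        refine (SimpleGraph.fromRel_adj _ _ _).mpr ⟨?_, Or.inl (Or.inr ?_)⟩
        · intro h
          have h' : fv a = fv b := congrArg Fin.val h
          rcases lt_trichotomy a b with hlt | hlt | hlt
          · rw [hva, hvb, if_pos hlt, if_neg (not_lt_of_gt hlt)] at h'; omega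
          · exact hne hlt
          · rw [hva, hvb, if_neg (not_lt_of_gt hlt), if_pos hlt] at h'; omega
        · show (fv a + 1) / 2 = (fv b + 1) / 2
          rcases lt_trichotomy a b with hlt | hlt | hlt
          · rw [hva, hvb, if_pos hlt, if_neg (not_lt_of_gt hlt)]; omega
          · exact absurd hlt hne
          · rw [hva, hvb, if_neg (not_lt_of_gt hlt), if_pos hlt]; omega


/-- A θ(1,2,2)-free graph on `n` vertices with a vertex of degree `n − 1` is
isomorphic to a subgraph of `Fₙ`. -/
theorem stmt12 (n : ℕ) (G : SimpleGraph (Fin n)) [DecidableRel G.Adj]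
    (hfree : ¬ contains theta122 G) (v : Fin n) (hv : G.degree v = n - 1) :
    contains G (friendship n) := by
  classical
  have hn : 1 ≤ n := Nat.pos_of_ne_zero (fun h => (h ▸ v).elim0)
  have h1 : ∀ u : Fin n, u ≠ v → G.Adj v u := by
    intro u hu
    have hsub : G.neighborFinset v ⊆ Finset.univ.erase v := by
      intro x hx
      simp only [Finset.mem_erase, Finset.mem_univ, and_true]
      exact fun h => G.irrefl (h ▸ (SimpleGraph.mem_neighborFinset G v x).mp hx)
    have hcard : (Finset.univ.erase v).card ≤ (G.neighborFinset v).card := by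
      rw [SimpleGraph.card_neighborFinset_eq_degree, hv,
        Finset.card_erase_of_mem (Finset.mem_univ v), Finset.card_univ, Fintype.card_fin]
    have := Finset.eq_of_subset_of_card_le hsub hcard
    have hu2 : u ∈ G.neighborFinset v := by rw [this]; simp [hu]
    exact (SimpleGraph.mem_neighborFinset G v u).mp hu2
  have hm : ∀ x y z : Fin n, x ≠ v → y ≠ v → z ≠ v → G.Adj x y → G.Adj x z → y = z := by
    intro x y z hx hy hz hxy hxz
    by_contra hne
    apply hfree
    refine ⟨![v, x, y, z], ?_, ?_⟩
    · intro a b hab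
      have hvx := (h1 x hx).ne
      have hvy := (h1 y hy).ne
      have hvz := (h1 z hz).ne
      fin_cases a <;> fin_cases b <;> simp_all
    · intro a b hab
      simp only [theta122, SimpleGraph.fromEdgeSet_adj, Set.mem_insert_iff,
        Set.mem_singleton_iff, Sym2.eq_iff] at hab
      fin_cases a <;> fin_cases b <;> simp_all <;>
        first
          | exact h1 x hx
          | exact h1 y hy
          | exact h1 z hz
          | exact hxy
          | exact hxz
          | exact (h1 x hx).symm
          | exact (h1 y hy).symm
          | exact (h1 z hz).symm
          | exact hxy.symm
          | exact hxz.symm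
  -- partner function
  set pt : Fin n → Fin n := fun x => if h : ∃ y, y ≠ v ∧ G.Adj x y then h.choose else x with hpt
  have hpt1 : ∀ x, (∃ y, y ≠ v ∧ G.Adj x y) → pt x ≠ v ∧ G.Adj x (pt x) := by
    intro x h
    simp only [hpt, dif_pos h]
    exact h.choose_spec
  have hpt2 : ∀ x y, x ≠ v → y ≠ v → G.Adj x y → pt x = y := by
    intro x y hx hy hxy
    obtain ⟨ha, hb⟩ := hpt1 x ⟨y, hy, hxy⟩
    exact hm x (pt x) y hx ha hy hb hxy
  -- the matching
  set P : Finset (Sym2 (Fin n)) := G.edgeFinset.filter (fun e => v ∉ e) with hPdef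
  have hedge : ∀ x, x ≠ v → (∃ y, y ≠ v ∧ G.Adj x y) → s(x, pt x) ∈ P := by
    intro x hx h
    obtain ⟨ha, hb⟩ := hpt1 x h
    simp only [hPdef, Finset.mem_filter, SimpleGraph.mem_edgeFinset, SimpleGraph.mem_edgeSet,
      Sym2.mem_iff]
    refine ⟨hb, ?_⟩
    rintro (h3 | h3)
    · exact hx h3.symm
    · exact ha h3.symm
  -- matched and unmatched vertex sets
  set M : Finset (Fin n) := (Finset.univ.erase v).filter (fun x => ∃ y, y ≠ v ∧ G.Adj x y)
    with hMdef
  set U : Finset (Fin n) := (Finset.univ.erase v).filter (fun x => ¬ ∃ y, y ≠ v ∧ G.Adj x y)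
    with hUdef
  have hMU : M.card + U.card = n - 1 := by
    rw [hMdef, hUdef, Finset.card_filter_add_card_filter_not,
      Finset.card_erase_of_mem (Finset.mem_univ v), Finset.card_univ, Fintype.card_fin]
  -- 2 * P.card ≤ M.card via surjection
  have hsurj : Set.SurjOn (fun x : Fin n => ((s(x, pt x), decide (x < pt x)) : Sym2 (Fin n) × Bool))
      ↑M ↑(P ×ˢ (Finset.univ : Finset Bool)) := by
    rintro ⟨e, bl⟩ hmem
    simp only [Finset.coe_product, Set.mem_prod, Finset.mem_coe] at hmem
    obtain ⟨he, -⟩ := hmem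
    induction e using Sym2.inductionOn with
    | hf a b =>
      simp only [hPdef, Finset.mem_filter, SimpleGraph.mem_edgeFinset,
        SimpleGraph.mem_edgeSet, Sym2.mem_iff] at he
      obtain ⟨hab, hne⟩ := he
      push_neg at hne
      have hav : a ≠ v := fun h => hne.1 h.symm
      have hbv : b ≠ v := fun h => hne.2 h.symm
      have hpa : pt a = b := hpt2 a b hav hbv hab
      have hpb : pt b = a := hpt2 b a hbv hav hab.symm
      have haM : a ∈ M := by
        simp only [hMdef, Finset.mem_filter, Finset.mem_erase, Finset.mem_univ, and_true]
        exact ⟨hav, b, hbv, hab⟩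
      have hbM : b ∈ M := by
        simp only [hMdef, Finset.mem_filter, Finset.mem_erase, Finset.mem_univ, and_true]
        exact ⟨hbv, a, hav, hab.symm⟩
      by_cases hbl : bl = decide (a < b)
      · exact ⟨a, haM, by simp [hpa, hbl]⟩
      · refine ⟨b, hbM, ?_⟩
        have hsw : s(b, pt b) = s(a, b) := by rw [hpb]; exact Sym2.eq_swap
        have hdec : decide (b < pt b) = bl := by
          rw [hpb]
          rcases lt_or_gt_of_ne hab.ne with h | h
          · cases bl
            · simp [not_lt_of_gt h]
            · exact absurd (by simp [h]) hbl
          · cases bl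
            · exact absurd (by simp [not_lt_of_gt h]) hbl
            · simp [h]
        rw [Prod.mk.injEq]
        exact ⟨hsw, hdec⟩
  have h2m : 2 * P.card ≤ M.card := by
    have := Finset.card_le_card_of_surjOn _ hsurj
    simpa [Finset.card_product, mul_comm] using this
  -- index functions
  set eI : Fin n → ℕ := fun x => if h : s(x, pt x) ∈ P then (P.equivFin ⟨_, h⟩ : Fin P.card).val
    else 0 with heIdef
  set uI : Fin n → ℕ := fun x => if h : x ∈ U then (U.equivFin ⟨x, h⟩ : Fin U.card).val else 0
    with huIdef
  have hUmem : ∀ x, x ≠ v → ¬(∃ y, y ≠ v ∧ G.Adj x y) → x ∈ U := by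
    intro x hx h
    simp only [hUdef, Finset.mem_filter, Finset.mem_erase, Finset.mem_univ, and_true]
    exact ⟨hx, h⟩
  apply embed_aux n G v pt P.card U.card eI uI hn (by omega) hpt2
  · intro x hx h
    simp only [heIdef, dif_pos (hedge x hx h)]
    exact (P.equivFin ⟨_, hedge x hx h⟩).isLt
  · intro x y hx hy hmx hmy hIeq
    have hx' := hedge x hx hmx
    have hy' := hedge y hy hmy
    simp only [heIdef, dif_pos hx', dif_pos hy'] at hIeq
    have := P.equivFin.injective (Fin.ext hIeq)
    exact Subtype.ext_iff.mp this
  · intro a b ha hb hab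
    have hma : ∃ y, y ≠ v ∧ G.Adj a y := ⟨b, hb, hab⟩
    have hmb : ∃ y, y ≠ v ∧ G.Adj b y := ⟨a, ha, hab.symm⟩
    have hea := hedge a ha hma
    have heb := hedge b hb hmb
    have hsw : s(a, pt a) = s(b, pt b) := by
      rw [hpt2 a b ha hb hab, hpt2 b a hb ha hab.symm]
      exact Sym2.eq_swap
    simp only [heIdef, dif_pos hea, dif_pos heb]
    exact congrArg (fun t => (P.equivFin t).val) (Subtype.ext hsw)
  · intro x hx h
    have hxU := hUmem x hx h
    simp only [huIdef, dif_pos hxU]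
    exact (U.equivFin ⟨x, hxU⟩).isLt
  · intro x y hx hy hmx hmy hIeq
    have hxU := hUmem x hx hmx
    have hyU := hUmem y hy hmy
    simp only [huIdef, dif_pos hxU, dif_pos hyU] at hIeq
    have := U.equivFin.injective (Fin.ext hIeq)
    exact Subtype.ext_iff.mp this
end

section
/- Let G be a simple graph on n vertices that is both θ(1,2,2)-free and F₅-free and contains a vertex of degree n − 1. Then G is isomorphic to a subgraph of S_{n,1}⁺. -/
open SimpleGraph Finset

lemma theta_aux {n : ℕ} {G : SimpleGraph (Fin n)} {v a b c : Fin n}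
    (hbc : b ≠ c) (hva : G.Adj v a) (hvb : G.Adj v b) (hab : G.Adj a b)
    (hvc : G.Adj v c) (hac : G.Adj a c) : contains theta122 G := by
  have h1 : v ≠ a := hva.ne
  have h2 : v ≠ b := hvb.ne
  have h3 : v ≠ c := hvc.ne
  have h4 : a ≠ b := hab.ne
  have h5 : a ≠ c := hac.ne
  refine ⟨![v,a,b,c], ?_, ?_⟩
  · intro i j hij
    fin_cases i <;> fin_cases j <;> simp_all
  · intro i j h
    fin_cases i <;> fin_cases j <;>
      simp_all [theta122, Sym2.eq, Sym2.rel_iff', Fin.ext_iff] <;>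
      first
        | exact hva | exact hvb | exact hab | exact hvc | exact hac
        | exact hva.symm | exact hvb.symm | exact hab.symm | exact hvc.symm | exact hac.symm
        | exact absurd h (by decide)

lemma f5_aux {n : ℕ} {G : SimpleGraph (Fin n)} {v a b c d : Fin n}
    (hac : a ≠ c) (had : a ≠ d) (hbc : b ≠ c) (hbd : b ≠ d)
    (hva : G.Adj v a) (hvb : G.Adj v b) (hvc : G.Adj v c) (hvd : G.Adj v d)
    (hab : G.Adj a b) (hcd : G.Adj c d) : contains (friendship 5) G := by
  have h1 : v ≠ a := hva.ne
  have h2 : v ≠ b := hvb.ne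
  have h3 : v ≠ c := hvc.ne
  have h4 : v ≠ d := hvd.ne
  have h5 : a ≠ b := hab.ne
  have h6 : c ≠ d := hcd.ne
  refine ⟨![v,a,b,c,d], ?_, ?_⟩
  · intro i j hij
    fin_cases i <;> fin_cases j <;> simp_all
  · intro i j h
    fin_cases i <;> fin_cases j <;>
      simp_all [friendship] <;>
      first
        | exact hva | exact hvb | exact hvc | exact hvd | exact hab | exact hcd
        | exact hva.symm | exact hvb.symm | exact hvc.symm | exact hvd.symm
        | exact hab.symm | exact hcd.symm
        | exact absurd h (by decide)

/-- A {θ(1,2,2), F₅}-free graph on `n` vertices with a vertex of degree `n − 1`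
is isomorphic to a subgraph of `S_{n,1}⁺`. -/
theorem stmt13 (n : ℕ) (G : SimpleGraph (Fin n)) [DecidableRel G.Adj]
    (h1 : ¬ contains theta122 G) (h2 : ¬ contains (friendship 5) G)
    (v : Fin n) (hv : G.degree v = n - 1) :
    contains G (Splus n) := by
  classical
  have hn1 : 0 < n := v.pos
  -- v is adjacent to every other vertex
  have hadj : ∀ w, w ≠ v → G.Adj v w := by
    have hsub : G.neighborFinset v ⊆ Finset.univ.erase v := by
      intro w hw
      rw [SimpleGraph.mem_neighborFinset] at hw
      exact Finset.mem_erase.2 ⟨hw.ne', Finset.mem_univ w⟩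
    have hcard : (Finset.univ.erase v).card ≤ (G.neighborFinset v).card := by
      rw [Finset.card_erase_of_mem (Finset.mem_univ v), Finset.card_univ,
        Fintype.card_fin]
      rw [SimpleGraph.degree] at hv
      omega
    have heq := Finset.eq_of_subset_of_card_le hsub hcard
    intro w hw
    have : w ∈ G.neighborFinset v := by
      rw [heq]; exact Finset.mem_erase.2 ⟨hw, Finset.mem_univ w⟩
    exact (SimpleGraph.mem_neighborFinset G v w).1 this
  -- uniqueness of the edge avoiding v
  have huniq : ∀ a b, G.Adj a b → a ≠ v → b ≠ v → ∀ c d, G.Adj c d → c ≠ v → d ≠ v →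
      (c = a ∧ d = b) ∨ (c = b ∧ d = a) := by
    intro a b hab ha hb c d hcd hc hd
    by_contra hcon
    push_neg at hcon
    have hva := hadj a ha
    have hvb := hadj b hb
    have hvc := hadj c hc
    have hvd := hadj d hd
    by_cases h : (c = a ∨ c = b ∨ d = a ∨ d = b)
    · rcases h with rfl | rfl | rfl | rfl
      · -- edges cb and cd : theta v c b d
        have hbd : b ≠ d := by
          rintro rfl; exact (hcon.1 rfl).elim rfl
        exact h1 (theta_aux hbd hvc hvb hab hvd hcd)
      · -- edges ac and cd : theta v c a d
        have had : a ≠ d := by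
          rintro rfl; exact (hcon.2 rfl).elim rfl
        exact h1 (theta_aux had hvc hva hab.symm hvd hcd)
      · -- edges ab and ca : theta v a b c
        have hbc : b ≠ c := by
          rintro rfl; exact (hcon.2 rfl).elim rfl
        exact h1 (theta_aux hbc hva hvb hab hvc hcd.symm)
      · -- edges ab and cb : theta v b a c
        have hac : a ≠ c := by
          rintro rfl; exact (hcon.1 rfl).elim rfl
        exact h1 (theta_aux hac hvb hva hab.symm hvc hcd.symm)
    · push_neg at h
      obtain ⟨hca, hcb, hda, hdb⟩ := h
      exact h2 (f5_aux (Ne.symm hca) (Ne.symm hda) (Ne.symm hcb) (Ne.symm hdb)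
        hva hvb hvc hvd hab hcd)
  by_cases hex : ∃ a b, G.Adj a b ∧ a ≠ v ∧ b ≠ v
  · obtain ⟨a, b, hab, ha, hb⟩ := hex
    have hva := hadj a ha
    have hvb := hadj b hb
    have hn3 : 3 ≤ n := by
      have : ({v, a, b} : Finset (Fin n)).card ≤ n := by
        simpa using Finset.card_le_univ ({v, a, b} : Finset (Fin n))
      have h3 : ({v, a, b} : Finset (Fin n)).card = 3 := by
        rw [Finset.card_insert_of_notMem (by simp [hva.ne, hvb.ne]),
          Finset.card_insert_of_notMem (by simp [hab.ne]), Finset.card_singleton]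
      omega
    set z : Fin n := ⟨0, by omega⟩
    set o : Fin n := ⟨1, by omega⟩
    set t : Fin n := ⟨2, by omega⟩
    have hzo : z ≠ o := by simp [z, o, Fin.ext_iff]
    have hzt : z ≠ t := by simp [z, t, Fin.ext_iff]
    have hot : o ≠ t := by simp [o, t, Fin.ext_iff]
    let e1 := Equiv.swap v z
    let e2 := Equiv.swap (e1 a) o
    let e3 := Equiv.swap (e2 (e1 b)) t
    let f := (e1.trans e2).trans e3
    have he1v : e1 v = z := Equiv.swap_apply_left v z
    have he1a : e1 a ≠ z := by
      rw [← he1v]; exact fun h => hva.ne' (e1.injective h)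
    have he1b : e1 b ≠ z := by
      rw [← he1v]; exact fun h => hvb.ne' (e1.injective h)
    have he2z : e2 z = z := Equiv.swap_apply_of_ne_of_ne (Ne.symm he1a) hzo
    have he2a : e2 (e1 a) = o := Equiv.swap_apply_left _ _
    have he2b1 : e2 (e1 b) ≠ z := by
      rw [← he2z]; exact fun h => he1b (e2.injective h)
    have he2b2 : e2 (e1 b) ≠ o := by
      rw [← he2a]
      exact fun h => hab.ne' (e1.injective (e2.injective h))
    have he3z : e3 z = z := Equiv.swap_apply_of_ne_of_ne (Ne.symm he2b1) hzt
    have he3o : e3 o = o := Equiv.swap_apply_of_ne_of_ne (Ne.symm he2b2) hot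
    have hfv : f v = z := by simp only [f, Equiv.trans_apply, he1v, he2z, he3z]
    have hfa : f a = o := by simp only [f, Equiv.trans_apply, he2a, he3o]
    have hfb : f b = t := by
      simp only [f, Equiv.trans_apply]
      exact Equiv.swap_apply_left _ _
    refine ⟨f, f.injective, ?_⟩
    intro x y hxy
    have hne : f x ≠ f y := fun h => hxy.ne (f.injective h)
    rcases eq_or_ne x v with rfl | hx
    · rw [hfv]
      exact (SimpleGraph.fromRel_adj _ _ _).2 ⟨by rwa [hfv] at hne, Or.inl (Or.inl rfl)⟩
    rcases eq_or_ne y v with rfl | hy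
    · rw [hfv]
      exact (SimpleGraph.fromRel_adj _ _ _).2 ⟨by rwa [hfv] at hne, Or.inr (Or.inl rfl)⟩
    rcases huniq a b hab ha hb x y hxy hx hy with ⟨rfl, rfl⟩ | ⟨rfl, rfl⟩
    · rw [hfa, hfb]
      exact (SimpleGraph.fromRel_adj _ _ _).2 ⟨hot, Or.inl (Or.inr ⟨rfl, rfl⟩)⟩
    · rw [hfb, hfa]
      exact (SimpleGraph.fromRel_adj _ _ _).2 ⟨Ne.symm hot, Or.inr (Or.inr ⟨rfl, rfl⟩)⟩
  · push_neg at hex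
    refine ⟨Equiv.swap v ⟨0, hn1⟩, (Equiv.swap v ⟨0, hn1⟩).injective, ?_⟩
    intro x y hxy
    have hne : Equiv.swap v ⟨0, hn1⟩ x ≠ Equiv.swap v ⟨0, hn1⟩ y :=
      fun h => hxy.ne ((Equiv.swap v ⟨0, hn1⟩).injective h)
    rcases eq_or_ne x v with rfl | hx
    · rw [Equiv.swap_apply_left]
      exact (SimpleGraph.fromRel_adj _ _ _).2 ⟨by rwa [Equiv.swap_apply_left] at hne,
        Or.inl (Or.inl rfl)⟩
    · rcases eq_or_ne y v with rfl | hy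
      · rw [Equiv.swap_apply_left]
        exact (SimpleGraph.fromRel_adj _ _ _).2 ⟨by rwa [Equiv.swap_apply_left] at hne,
          Or.inr (Or.inl rfl)⟩
      · exact absurd (hex x y hxy hx) hy
end
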